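/- For every s ∈ ℝ with π/8 ≤ s₁ − s ≤ π/2, the derivative of Ψ satisfies |Ψ'(s)| ≤ π. -/

import Mathlib

/-- The circular helix `u(s) = (cos as, sin as, √(1−a²)·s)` in `ℝ³` (Euclidean). -/
noncomputable def helix (a : ℝ) (s : ℝ) : EuclideanSpace ℝ (Fin 3) :=
  (WithLp.equiv 2 (Fin 3 → ℝ)).symm
    ![Real.cos (a * s), Real.sin (a * s), Real.sqrt (1 - a ^ 2) * s]

lemma helix_normsq (a s s₁ : ℝ) :
    ‖helix a s - helix a s₁‖ ^ 2 =
      (Real.cos (a*s) - Real.cos (a*s₁))^2 + (Real.sin (a*s) - Real.sin (a*s₁))^2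
        + (Real.sqrt (1-a^2)*s - Real.sqrt (1-a^2)*s₁)^2 := by
  rw [EuclideanSpace.norm_eq, Real.sq_sqrt (by positivity)]
  simp [helix, Fin.sum_univ_three, WithLp.equiv_symm_apply, PiLp.toLp_apply, Real.norm_eq_abs, sq_abs]

lemma helix_deriv (a : ℝ) (ha0 : 0 < a) (ha1 : a < 1) (s₁ s : ℝ) :
    deriv (fun t => ‖helix a t - helix a s₁‖ ^ 2) s
      = 2*a*Real.sin (a*(s - s₁)) + 2*(1-a^2)*(s - s₁) := by
  have hF : (fun t => ‖helix a t - helix a s₁‖ ^ 2)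
      = fun t => (Real.cos (a*t) - Real.cos (a*s₁))^2 + (Real.sin (a*t) - Real.sin (a*s₁))^2
        + (Real.sqrt (1-a^2)*t - Real.sqrt (1-a^2)*s₁)^2 := by
    funext t; exact helix_normsq a t s₁
  rw [hF]
  have hat : HasDerivAt (fun t : ℝ => a * t) a s := by
    simpa using (hasDerivAt_id s).const_mul a
  have h1 : HasDerivAt (fun t => Real.cos (a*t)) (-Real.sin (a*s) * a) s :=
    (Real.hasDerivAt_cos (a*s)).comp s hat
  have h2 : HasDerivAt (fun t => Real.sin (a*t)) (Real.cos (a*s) * a) s :=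
    (Real.hasDerivAt_sin (a*s)).comp s hat
  have h3 : HasDerivAt (fun t : ℝ => Real.sqrt (1-a^2) * t) (Real.sqrt (1-a^2)) s := by
    simpa using (hasDerivAt_id s).const_mul (Real.sqrt (1-a^2))
  have H := (((h1.sub_const (Real.cos (a*s₁))).pow 2).add
      ((h2.sub_const (Real.sin (a*s₁))).pow 2)).add
      ((h3.sub_const (Real.sqrt (1-a^2)*s₁)).pow 2)
  rw [HasDerivAt.deriv (f := fun t => (Real.cos (a*t) - Real.cos (a*s₁))^2 + (Real.sin (a*t) - Real.sin (a*s₁))^2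
        + (Real.sqrt (1-a^2)*t - Real.sqrt (1-a^2)*s₁)^2) H]
  have hs : Real.sqrt (1-a^2) * Real.sqrt (1-a^2) = 1 - a^2 :=
    Real.mul_self_sqrt (by nlinarith)
  rw [mul_sub, Real.sin_sub]
  push_cast
  simp only [pow_one]
  linear_combination 2*(s-s₁)*hs

/-- if `π/8 ≤ s₁ − s ≤ π/2` then `|Ψ'(s)| ≤ π`,
where `Ψ(s) = ‖u(s) − u(s₁)‖²`. -/
theorem statement11 (a : ℝ) (ha0 : 0 < a) (ha1 : a < 1) (s₁ : ℝ) :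
    ∀ s : ℝ, Real.pi / 8 ≤ s₁ - s → s₁ - s ≤ Real.pi / 2 →
      |deriv (fun t => ‖helix a t - helix a s₁‖ ^ 2) s| ≤ Real.pi := by
  intro s h1 h2
  rw [helix_deriv a ha0 ha1 s₁ s]
  set d := s₁ - s with hd
  have hsd : s - s₁ = -d := by rw [hd]; ring
  rw [hsd, mul_neg, Real.sin_neg]
  have hd0 : 0 < d := lt_of_lt_of_le (by positivity) h1
  have had : 0 < a * d := by positivity
  have hadp : a * d ≤ Real.pi := by
    nlinarith [Real.pi_pos]
  have hsin0 : 0 ≤ Real.sin (a * d) :=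
    Real.sin_nonneg_of_nonneg_of_le_pi had.le hadp
  have hsinle : Real.sin (a * d) ≤ a * d := Real.sin_le had.le
  rw [abs_of_nonpos (by nlinarith)]
  nlinarith
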